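/- Let 𝐀 ⊆ ℝ^{m×n} be an interval matrix and 𝐛 ⊆ ℝᵐ, 𝐜 ⊆ ℝⁿ interval vectors, and consider the interval linear program min c⊤x subject to Ax = b, x ≥ 0 (with A ∈ 𝐀, b ∈ 𝐛, c ∈ 𝐜). The program is strongly feasible (i.e., for every A ∈ 𝐀 and b ∈ 𝐛 there exists x ≥ 0 with Ax = b) if and only if its worst optimal value f̄ — the supremum over all scenarios of the scenario's optimal value in the extended reals, with +∞ for infeasible scenarios — satisfies f̄ < ∞. -/

import Mathlib

open Matrix

/-- Entrywise order on real matrices. -/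
def matLE {m n : ℕ} (A B : Matrix (Fin m) (Fin n) ℝ) : Prop := ∀ i j, A i j ≤ B i j

lemma sign_cover_mem {m : ℕ} (C : Set (Fin m → ℝ)) (hconv : Convex ℝ C)
    (hclosed : IsClosed C) (b : Fin m → ℝ)
    (hcover : ∀ s : Fin m → Bool, ∃ z ∈ C, ∀ i, if s i then b i ≤ z i else z i ≤ b i) :
    b ∈ C := by
  by_contra hb
  obtain ⟨f, u, hfb, hfz⟩ := geometric_hahn_banach_point_closed hconv hclosed hb
  set y : Fin m → ℝ := fun i => f (fun j => if i = j then (1:ℝ) else 0) with hy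
  obtain ⟨z, hzC, hz⟩ := hcover (fun i => decide (y i ≤ 0))
  have hrep : ∀ x : Fin m → ℝ, f x = ∑ i, x i * y i := by
    intro x
    conv_lhs => rw [pi_eq_sum_univ x, map_sum]
    refine Finset.sum_congr rfl fun i _ => ?_
    rw [_root_.map_smul, smul_eq_mul, hy]
  have hle : f z ≤ f b := by
    have h1 : f z - f b = ∑ i, (z i - b i) * y i := by
      rw [← map_sub, hrep]
      simp [Pi.sub_apply]
    have h2 : ∑ i, (z i - b i) * y i ≤ 0 := by
      apply Finset.sum_nonpos
      intro i _
      have := hz i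
      by_cases hyi : y i ≤ 0
      · simp [hyi] at this
        exact mul_nonpos_of_nonneg_of_nonpos (by linarith) hyi
      · simp [hyi] at this
        exact mul_nonpos_of_nonpos_of_nonneg (by linarith) (le_of_not_ge hyi)
    linarith
  exact absurd ((hfz z hzC).trans_le hle) (not_lt.2 hfb.le)

/-- An interval linear program `min cᵀx, Ax = b, x ≥ 0` is strongly feasible if and only
if its worst optimal value is finite. -/
theorem strongly_feasible_iff_worst_value_finite (m n : ℕ)
    (Al Au : Matrix (Fin m) (Fin n) ℝ) (bl bu : Fin m → ℝ) (cl cu : Fin n → ℝ)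
    (hA : matLE Al Au) (hb : bl ≤ bu) (hc : cl ≤ cu) :
    (∀ (A : Matrix (Fin m) (Fin n) ℝ) (b : Fin m → ℝ),
        matLE Al A → matLE A Au → bl ≤ b → b ≤ bu →
        ∃ x : Fin n → ℝ, A.mulVec x = b ∧ 0 ≤ x) ↔
    (⨆ A : {A : Matrix (Fin m) (Fin n) ℝ // matLE Al A ∧ matLE A Au},
     ⨆ b : {b : Fin m → ℝ // bl ≤ b ∧ b ≤ bu},
     ⨆ c : {c : Fin n → ℝ // cl ≤ c ∧ c ≤ cu},
     ⨅ x : {x : Fin n → ℝ // A.1.mulVec x = b.1 ∧ 0 ≤ x},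
       ((c.1 ⬝ᵥ x.1 : ℝ) : EReal)) < ⊤ := by
  constructor
  · intro hsf
    -- pick feasible points for the 2^m sign-pattern scenarios
    have hxs : ∀ s : Fin m → Bool, ∃ x : Fin n → ℝ,
        (Matrix.of fun i j => if s i then Al i j else Au i j).mulVec x
          = (fun i => if s i then bu i else bl i) ∧ 0 ≤ x := by
      intro s
      refine hsf _ _ ?_ ?_ ?_ ?_
      · intro i j; by_cases h : s i <;> simp [h, hA i j]
      · intro i j; by_cases h : s i <;> simp [h, hA i j]
      · intro i; by_cases h : s i <;> simp [h, hb i]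
      · intro i; by_cases h : s i <;> simp [h, hb i]
    choose xs hxs1 hxs2 using hxs
    obtain ⟨s₀, hs₀⟩ := Finite.exists_max (fun s : Fin m → Bool => cu ⬝ᵥ xs s)
    set M : ℝ := cu ⬝ᵥ xs s₀ with hM
    refine lt_of_le_of_lt
      (iSup_le fun A => iSup_le fun b => iSup_le fun c => ?_) (EReal.coe_lt_top M)
    obtain ⟨A, hA1, hA2⟩ := A
    obtain ⟨b, hb1, hb2⟩ := b
    obtain ⟨c, hc1, hc2⟩ := c
    -- the convex hull of the xs
    set X : Set (Fin n → ℝ) := convexHull ℝ (Set.range xs) with hX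
    have hXpos : X ⊆ {x : Fin n → ℝ | 0 ≤ x} := by
      refine convexHull_min ?_ ?_
      · rintro w ⟨s, rfl⟩; exact hxs2 s
      · have : {x : Fin n → ℝ | 0 ≤ x} = Set.Ici (0 : Fin n → ℝ) := rfl
        rw [this]; exact convex_Ici 0
    have hXcu : X ⊆ {z : Fin n → ℝ | cu ⬝ᵥ z ≤ M} := by
      refine convexHull_min ?_ ?_
      · rintro w ⟨s, rfl⟩; exact hs₀ s
      · exact convex_halfSpace_le ⟨fun a b => dotProduct_add cu a b,
          fun r a => by simp [dotProduct_smul]⟩ M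
    -- b is in the image of X under A
    have hbmem : b ∈ A.mulVecLin '' X := by
      refine sign_cover_mem _ ?_ ?_ _ ?_
      · exact ((convex_convexHull ℝ _).linear_image A.mulVecLin)
      · exact (((Set.finite_range xs).isCompact_convexHull (𝕜 := ℝ)).image
          A.mulVecLin.continuous_of_finiteDimensional).isClosed
      · intro s
        refine ⟨A.mulVec (xs s), ⟨xs s, subset_convexHull ℝ _ (Set.mem_range_self s), rfl⟩, ?_⟩
        intro i
        have hrow := congrFun (hxs1 s) i
        by_cases h : s i
        · simp only [h, if_true]
          have h1 : (Matrix.of fun i j => if s i then Al i j else Au i j).mulVec (xs s) i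
              = bu i := by rw [hrow]; simp [h]
          have h2 : (Matrix.of fun i j => if s i then Al i j else Au i j).mulVec (xs s) i
              ≤ A.mulVec (xs s) i := by
            simp only [Matrix.mulVec, dotProduct, Matrix.of_apply]
            refine Finset.sum_le_sum fun j _ => ?_
            have : Al i j ≤ A i j := hA1 i j
            have hx := hxs2 s j
            simp only [h, if_true]
            exact mul_le_mul_of_nonneg_right this hx
          calc b i ≤ bu i := hb2 i
            _ ≤ A.mulVec (xs s) i := by rw [← h1]; exact h2
        · simp only [h, if_false]
          have h1 : (Matrix.of fun i j => if s i then Al i j else Au i j).mulVec (xs s) i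
              = bl i := by rw [hrow]; simp [h]
          have h2 : A.mulVec (xs s) i
              ≤ (Matrix.of fun i j => if s i then Al i j else Au i j).mulVec (xs s) i := by
            simp only [Matrix.mulVec, dotProduct, Matrix.of_apply]
            refine Finset.sum_le_sum fun j _ => ?_
            have : A i j ≤ Au i j := hA2 i j
            have hx := hxs2 s j
            simp only [h, if_false]
            exact mul_le_mul_of_nonneg_right this hx
          calc A.mulVec (xs s) i ≤ bl i := by rw [← h1]; exact h2
            _ ≤ b i := hb1 i
    obtain ⟨x, hxX, hxA⟩ := hbmem
    have hx0 : 0 ≤ x := hXpos hxX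
    have hxeq : A.mulVec x = b := hxA
    refine le_trans (iInf_le_of_le ⟨x, hxeq, hx0⟩ ?_) (le_refl _)
    have hcx : c ⬝ᵥ x ≤ M := by
      have h1 : c ⬝ᵥ x ≤ cu ⬝ᵥ x := by
        refine Finset.sum_le_sum fun j _ => ?_
        exact mul_le_mul_of_nonneg_right (hc2 j) (hx0 j)
      exact h1.trans (hXcu hxX)
    exact_mod_cast EReal.coe_le_coe_iff.2 hcx
  · intro hlt A b hA1 hA2 hb1 hb2
    by_contra hne
    have hempty : IsEmpty {x : Fin n → ℝ // A.mulVec x = b ∧ 0 ≤ x} :=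
      ⟨fun x => hne ⟨x.1, x.2.1, x.2.2⟩⟩
    have htop : (⊤ : EReal) ≤
        (⨆ A : {A : Matrix (Fin m) (Fin n) ℝ // matLE Al A ∧ matLE A Au},
         ⨆ b : {b : Fin m → ℝ // bl ≤ b ∧ b ≤ bu},
         ⨆ c : {c : Fin n → ℝ // cl ≤ c ∧ c ≤ cu},
         ⨅ x : {x : Fin n → ℝ // A.1.mulVec x = b.1 ∧ 0 ≤ x},
           ((c.1 ⬝ᵥ x.1 : ℝ) : EReal)) := by
      refine le_iSup_of_le ⟨A, hA1, hA2⟩ (le_iSup_of_le ⟨b, hb1, hb2⟩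
        (le_iSup_of_le ⟨cl, le_rfl, hc⟩ ?_))
      rw [iInf_of_empty]
    exact absurd (htop.trans_lt hlt) (lt_irrefl _)
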